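/- Let V_κ be a weighted payoff objective and suppose p ∈ (0,1)⁵, q ∈ [0,1]⁵, p is not a best response with respect to V_κ, and player X cannot locally improve V_κ. Assume each single-coordinate marginal function of V_κ is monotone or constant. Then there exists d > 0 such that V_κ(p', q) = V_κ(p, q) for all p' with ‖p' - p‖ < d (V_κ is locally constant in p near p). -/

import Mathlib

open Matrix Filter

set_option maxHeartbeats 1000000

noncomputable section

/-- Row of the transition matrix for cooperation probabilities `a` (player X) and `b` (player Y). -/
def row2 (a b : ℝ) : Fin 4 → ℝ := ![a * b, a * (1 - b), (1 - a) * b, (1 - a) * (1 - b)]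

/-- Initial distribution over the four states CC, CD, DC, DD. -/
def nu0 (p q : Fin 5 → ℝ) : Fin 4 → ℝ := row2 (p 0) (q 0)

/-- Transition matrix `M(p,q)` of the repeated game for memory-one strategies. -/
def Mmat (p q : Fin 5 → ℝ) : Matrix (Fin 4) (Fin 4) ℝ :=
  Matrix.of ![row2 (p 1) (q 1), row2 (p 2) (q 3), row2 (p 3) (q 2), row2 (p 4) (q 4)]

/-- Discounted average state distribution `v = (1-λ)·ν₀·(I - λM)⁻¹`. -/
def vdist (lam : ℝ) (p q : Fin 5 → ℝ) : Fin 4 → ℝ :=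
  (1 - lam) • Matrix.vecMul (nu0 p q) (1 - lam • Mmat p q)⁻¹

/-- A memory-one strategy: all five entries lie in `[0,1]`. -/
def inCube (p : Fin 5 → ℝ) : Prop := ∀ i, p i ∈ Set.Icc (0:ℝ) 1

/-- Discounted repeated-game payoff with one-shot payoff vector `u`. -/
def pay (lam : ℝ) (p q : Fin 5 → ℝ) (u : Fin 4 → ℝ) : ℝ :=
  dotProduct (vdist lam p q) u

/-- One-shot payoff vector of player X. -/
def uvecX (R S T P : ℝ) : Fin 4 → ℝ := ![R, S, T, P]

/-- One-shot payoff vector of player Y. -/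
def uvecY (R S T P : ℝ) : Fin 4 → ℝ := ![R, T, S, P]

def IsAff (f : ℝ → ℝ) : Prop := ∃ a b : ℝ, ∀ z, f z = a * z + b

lemma IsAff.const (c : ℝ) : IsAff (fun _ => c) := ⟨0, c, fun z => by ring⟩

lemma IsAff.add {f g : ℝ → ℝ} (hf : IsAff f) (hg : IsAff g) : IsAff (fun z => f z + g z) := by
  obtain ⟨a, b, hf⟩ := hf; obtain ⟨c, d, hg⟩ := hg
  exact ⟨a + c, b + d, fun z => by show f z + g z = _; rw [hf, hg]; ring⟩

lemma IsAff.const_mul {f : ℝ → ℝ} (c : ℝ) (hf : IsAff f) : IsAff (fun z => c * f z) := by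
  obtain ⟨a, b, hf⟩ := hf; exact ⟨c * a, c * b, fun z => by show c * f z = _; rw [hf]; ring⟩

lemma IsAff.mul_const {f : ℝ → ℝ} (c : ℝ) (hf : IsAff f) : IsAff (fun z => f z * c) := by
  obtain ⟨a, b, hf⟩ := hf; exact ⟨a * c, b * c, fun z => by show f z * c = _; rw [hf]; ring⟩

lemma IsAff.sum {ι : Type*} (s : Finset ι) (f : ι → ℝ → ℝ) (h : ∀ i ∈ s, IsAff (f i)) :
    IsAff (fun z => ∑ i ∈ s, f i z) := by
  classical
  induction s using Finset.induction_on with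
  | empty => simpa using IsAff.const 0
  | insert a s hx ih =>
    simp only [Finset.sum_insert hx]
    exact (h a (Finset.mem_insert_self a s)).add
      (ih fun i hi => h i (Finset.mem_insert_of_mem hi))

lemma detAff (C : Matrix (Fin 4) (Fin 4) ℝ) (i : Fin 4) (w r : Fin 4 → ℝ) :
    IsAff (fun z => (C.updateRow i (fun k => w k + z * r k)).det) := by
  refine ⟨(C.updateRow i r).det, (C.updateRow i w).det, fun z => ?_⟩
  show (C.updateRow i fun k => w k + z * r k).det = _
  have h2 : (fun k => w k + z * r k) = w + z • r := by funext k; simp [smul_eq_mul]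
  rw [h2, det_updateRow_add, det_updateRow_smul]
  ring

lemma updateRow_updateRow {α : Type*} (C : Matrix (Fin 4) (Fin 4) α) (i : Fin 4) (v w : Fin 4 → α) :
    (C.updateRow i v).updateRow i w = C.updateRow i w := by
  ext a b
  rcases eq_or_ne a i with h | h
  · subst h; simp
  · simp [Matrix.updateRow_ne h]

lemma updateRow_comm' {α : Type*} (C : Matrix (Fin 4) (Fin 4) α) {i k : Fin 4} (h : k ≠ i)
    (v w : Fin 4 → α) :
    (C.updateRow i v).updateRow k w = (C.updateRow k w).updateRow i v := by
  ext a b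
  rcases eq_or_ne a i with h1 | h1 <;> rcases eq_or_ne a k with h2 | h2 <;>
    simp_all [Matrix.updateRow_ne, Matrix.updateRow_self]

lemma adjAff (C : Matrix (Fin 4) (Fin 4) ℝ) (i : Fin 4) (w r : Fin 4 → ℝ) (j k : Fin 4) :
    IsAff (fun z => (C.updateRow i (fun t => w t + z * r t)).adjugate j k) := by
  simp only [Matrix.adjugate_apply]
  rcases eq_or_ne k i with h | h
  · subst h
    have : ∀ z : ℝ, ((C.updateRow k (fun t => w t + z * r t)).updateRow k
        (Pi.single j 1)).det = ((C.updateRow k (Pi.single j 1))).det := by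
      intro z; rw [updateRow_updateRow]
    simp only [this]; exact IsAff.const _
  · have : ∀ z : ℝ, ((C.updateRow i (fun t => w t + z * r t)).updateRow k
        (Pi.single j 1)).det = (((C.updateRow k (Pi.single j 1))).updateRow i
        (fun t => w t + z * r t)).det := by
      intro z; rw [updateRow_comm' C h]
    simp only [this]
    exact detAff _ i w r

lemma Gaff (C : Matrix (Fin 4) (Fin 4) ℝ) (i : Fin 4) (w r ν u : Fin 4 → ℝ) :
    IsAff (fun z => (Matrix.vecMul ν ((C.updateRow i (fun t => w t + z * r t)).adjugate)) ⬝ᵥ u) := by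
  have h : ∀ z : ℝ, (Matrix.vecMul ν ((C.updateRow i (fun t => w t + z * r t)).adjugate)) ⬝ᵥ u
      = ∑ k, (∑ j, ν j * (C.updateRow i (fun t => w t + z * r t)).adjugate j k) * u k := by
    intro z; simp [dotProduct, Matrix.vecMul]
  simp only [h]
  refine IsAff.sum _ _ fun k _ => IsAff.mul_const _ (IsAff.sum _ _ fun j _ => ?_)
  exact IsAff.const_mul _ (adjAff C i w r j k)

lemma mobius_loc (N D : ℝ → ℝ) (hN : IsAff N) (hD : IsAff D) (hD0 : D 0 ≠ 0)
    (δ : ℝ) (hδ : 0 < δ)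
    (hmax : ∀ z, |z| < δ → D z ≠ 0 ∧ N z / D z ≤ N 0 / D 0) :
    ∀ z, D z ≠ 0 → N z / D z = N 0 / D 0 := by
  obtain ⟨a, b, hN'⟩ := hN
  obtain ⟨c, d, hD'⟩ := hD
  have hd : D 0 = d := by rw [hD']; ring
  have hdne : d ≠ 0 := hd ▸ hD0
  set K : ℝ := a * d - b * c with hK
  have key : ∀ z, D z ≠ 0 → N z / D z - N 0 / D 0 = K * z / (D z * D 0) := by
    intro z hz
    have h1 : c * z + d ≠ 0 := by rw [hD'] at hz; exact hz
    rw [hN' z, hD' z, hN' 0, hD' 0]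
    have h2 : c * 0 + d ≠ 0 := by simpa using hdne
    rw [div_sub_div _ _ h1 h2, hK]
    congr 1
    ring
  set z₀ : ℝ := min (δ / 2) (|d| / (2 * (|c| + 1))) with hz₀
  have hz₀pos : 0 < z₀ := by
    apply lt_min (by linarith)
    positivity
  have hz₀δ : z₀ < δ := lt_of_le_of_lt (min_le_left _ _) (by linarith)
  have hsign : ∀ z : ℝ, |z| ≤ z₀ → 0 < D z * D 0 := by
    intro z hz
    have h1 : |D z - D 0| < |D 0| := by
      have : D z - D 0 = c * z := by rw [hD' z, hD' 0]; ring
      rw [this, abs_mul, hd]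
      have h2 : |z| ≤ |d| / (2 * (|c| + 1)) := le_trans hz (min_le_right _ _)
      have h3 : (0:ℝ) < |d| := abs_pos.mpr hdne
      have h4 : (0:ℝ) ≤ |c| := abs_nonneg c
      calc |c| * |z| ≤ |c| * (|d| / (2 * (|c| + 1))) := by
            exact mul_le_mul_of_nonneg_left h2 h4
        _ < |d| := by
            rw [div_eq_mul_inv]
            have : (2 * (|c| + 1))⁻¹ > 0 := by positivity
            rw [show |c| * (|d| * (2 * (|c| + 1))⁻¹) = |c| / (2 * (|c|+1)) * |d| by ring]
            have h5 : |c| / (2 * (|c| + 1)) < 1 := by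
              rw [div_lt_one (by positivity)]; linarith
            nlinarith
    obtain ⟨hl, hr⟩ := abs_lt.mp h1
    rcases lt_or_gt_of_ne hD0 with h | h
    · have : |D 0| = -(D 0) := abs_of_neg h
      rw [this] at hl hr
      nlinarith
    · have : |D 0| = D 0 := abs_of_pos h
      rw [this] at hl hr
      nlinarith
  have hKz : K = 0 := by
    have hp := hmax z₀ (by rwa [abs_of_pos hz₀pos])
    have hm := hmax (-z₀) (by rwa [abs_neg, abs_of_pos hz₀pos])
    have e1 := key z₀ hp.1
    have e2 := key (-z₀) hm.1
    have s1 : K * z₀ / (D z₀ * D 0) ≤ 0 := by rw [← e1]; linarith [hp.2]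
    have s2 : K * (-z₀) / (D (-z₀) * D 0) ≤ 0 := by rw [← e2]; linarith [hm.2]
    have p1 : 0 < D z₀ * D 0 := hsign z₀ (by rw [abs_of_pos hz₀pos])
    have p2 : 0 < D (-z₀) * D 0 := hsign (-z₀) (by rw [abs_neg, abs_of_pos hz₀pos])
    have t1 : K * z₀ ≤ 0 := by
      have := (div_le_iff₀ p1).mp s1; linarith
    have t2 : K * (-z₀) ≤ 0 := by
      have := (div_le_iff₀ p2).mp s2; linarith
    nlinarith
  intro z hz
  have := key z hz
  rw [hKz] at this
  simp at this
  linarith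

lemma row2_nonneg {a b : ℝ} (ha : a ∈ Set.Icc (0:ℝ) 1) (hb : b ∈ Set.Icc (0:ℝ) 1) (j : Fin 4) :
    0 ≤ row2 a b j ∧ row2 a b j ≤ 1 := by
  obtain ⟨ha0, ha1⟩ := ha; obtain ⟨hb0, hb1⟩ := hb
  fin_cases j <;> constructor <;> simp [row2] <;> nlinarith

lemma row2_sum (a b : ℝ) : ∑ j, row2 a b j = 1 := by
  simp [row2, Fin.sum_univ_four]; ring

lemma Mmat_mem (p q : Fin 5 → ℝ) (hp : inCube p) (hq : inCube q) (k j : Fin 4) :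
    0 ≤ Mmat p q k j ∧ Mmat p q k j ≤ 1 := by
  fin_cases k
  · exact row2_nonneg (hp 1) (hq 1) j
  · exact row2_nonneg (hp 2) (hq 3) j
  · exact row2_nonneg (hp 3) (hq 2) j
  · exact row2_nonneg (hp 4) (hq 4) j

lemma Mmat_rowsum (p q : Fin 5 → ℝ) (k : Fin 4) : ∑ j, Mmat p q k j = 1 := by
  fin_cases k
  · exact row2_sum (p 1) (q 1)
  · exact row2_sum (p 2) (q 3)
  · exact row2_sum (p 3) (q 2)
  · exact row2_sum (p 4) (q 4)

lemma det_ne (lam : ℝ) (hlam : lam ∈ Set.Ico (0:ℝ) 1) (p q : Fin 5 → ℝ)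
    (hp : inCube p) (hq : inCube q) :
    ((1 : Matrix (Fin 4) (Fin 4) ℝ) - lam • Mmat p q).det ≠ 0 := by
  obtain ⟨hl0, hl1⟩ := hlam
  apply det_ne_zero_of_sum_row_lt_diag
  intro k
  have hmem := fun j => Mmat_mem p q hp hq k j
  have hsum := Mmat_rowsum p q k
  have hAkj : ∀ j ∈ Finset.univ.erase k,
      ‖((1 : Matrix (Fin 4) (Fin 4) ℝ) - lam • Mmat p q) k j‖ = lam * Mmat p q k j := by
    intro j hj
    have hjk : j ≠ k := Finset.ne_of_mem_erase hj
    have he : ((1 : Matrix (Fin 4) (Fin 4) ℝ) - lam • Mmat p q) k j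
        = -(lam * Mmat p q k j) := by
      simp [Matrix.sub_apply, Matrix.smul_apply, Matrix.one_apply, Ne.symm hjk, smul_eq_mul]
    rw [he, norm_neg, Real.norm_eq_abs, abs_of_nonneg (mul_nonneg hl0 (hmem j).1)]
  rw [Finset.sum_congr rfl hAkj]
  have h1 : ∑ j ∈ Finset.univ.erase k, lam * Mmat p q k j = lam * (1 - Mmat p q k k) := by
    rw [← Finset.mul_sum, Finset.sum_erase_eq_sub (Finset.mem_univ k), hsum]
  rw [h1]
  have hAkk : ‖((1 : Matrix (Fin 4) (Fin 4) ℝ) - lam • Mmat p q) k k‖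
      = 1 - lam * Mmat p q k k := by
    have he : ((1 : Matrix (Fin 4) (Fin 4) ℝ) - lam • Mmat p q) k k
        = 1 - lam * Mmat p q k k := by
      simp [Matrix.sub_apply, Matrix.smul_apply, Matrix.one_apply, smul_eq_mul]
    rw [he, Real.norm_eq_abs, abs_of_nonneg]
    nlinarith [(hmem k).2, (hmem k).1]
  rw [hAkk]
  nlinarith [(hmem k).1, (hmem k).2]

lemma vecMul_smul_mat (v : Fin 4 → ℝ) (c : ℝ) (B : Matrix (Fin 4) (Fin 4) ℝ) :
    v ᵥ* (c • B) = c • (v ᵥ* B) := by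
  ext k
  simp only [Matrix.vecMul, dotProduct, Matrix.smul_apply, Pi.smul_apply, smul_eq_mul,
    Finset.mul_sum]
  exact Finset.sum_congr rfl fun j _ => by ring

lemma pay_eq (lam : ℝ) (p q : Fin 5 → ℝ) (u : Fin 4 → ℝ) :
    pay lam p q u = (1 - lam) *
      ((Matrix.vecMul (nu0 p q) ((1 - lam • Mmat p q).adjugate) ⬝ᵥ u)
        / (1 - lam • Mmat p q).det) := by
  rw [pay, vdist, Matrix.inv_def, Ring.inverse_eq_inv, vecMul_smul_mat,
    smul_dotProduct, smul_dotProduct, smul_eq_mul, smul_eq_mul,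
    div_eq_mul_inv]
  ring

lemma pay_mobius (lam : ℝ) (q : Fin 5 → ℝ) (u : Fin 4 → ℝ) (r : Fin 5 → ℝ) (i : Fin 5) :
    ∃ N D : ℝ → ℝ, IsAff N ∧ IsAff D ∧
      (∀ z, D z = (1 - lam • Mmat (r + z • (Pi.single i 1 : Fin 5 → ℝ)) q).det) ∧
      (∀ z, pay lam (r + z • (Pi.single i 1 : Fin 5 → ℝ)) q u = N z / D z) := by
  have key : IsAff (fun z => ((Matrix.vecMul (nu0 (r + z • (Pi.single i 1 : Fin 5 → ℝ)) q)
        ((1 - lam • Mmat (r + z • (Pi.single i 1 : Fin 5 → ℝ)) q).adjugate)) ⬝ᵥ u)) ∧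
      IsAff (fun z => (1 - lam • Mmat (r + z • (Pi.single i 1 : Fin 5 → ℝ)) q).det) := by
    have hi : i = 0 ∨ i = 1 ∨ i = 2 ∨ i = 3 ∨ i = 4 := by fin_cases i <;> simp
    rcases hi with rfl | rfl | rfl | rfl | rfl
    · -- i = 0 : matrix constant, nu0 affine
      have hO : ∀ (z : ℝ) (j : Fin 5), j ≠ 0 → (r + z • (Pi.single (0:Fin 5) 1 : Fin 5 → ℝ)) j = r j := by
        intro z j hj; simp [Pi.single_eq_of_ne hj]
      have h0 : ∀ z : ℝ, (r + z • (Pi.single (0 : Fin 5) 1 : Fin 5 → ℝ)) 0 = r 0 + z := by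
        intro z; simp
      have hM : ∀ z : ℝ, Mmat (r + z • (Pi.single (0 : Fin 5) 1 : Fin 5 → ℝ)) q = Mmat r q := by
        intro z
        unfold Mmat
        rw [hO z 1 (by decide), hO z 2 (by decide), hO z 3 (by decide), hO z 4 (by decide)]
      have hν : ∀ z : ℝ, nu0 (r + z • (Pi.single (0 : Fin 5) 1 : Fin 5 → ℝ)) q
          = nu0 r q + z • ![q 0, 1 - q 0, -(q 0), -(1 - q 0)] := by
        intro z
        funext k
        have e0 := h0 z
        fin_cases k <;>
          simp [nu0, row2, e0] <;> ring
      refine ⟨?_, ?_⟩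
      · refine ⟨(Matrix.vecMul ![q 0, 1 - q 0, -(q 0), -(1 - q 0)]
            ((1 - lam • Mmat r q).adjugate)) ⬝ᵥ u,
          (Matrix.vecMul (nu0 r q) ((1 - lam • Mmat r q).adjugate)) ⬝ᵥ u, fun z => ?_⟩
        simp only [hM, hν]
        rw [Matrix.add_vecMul, Matrix.smul_vecMul, add_dotProduct,
          smul_dotProduct, smul_eq_mul]
        ring
      · simp only [hM]; exact IsAff.const _
    · -- i = 1
      have h0 : ∀ z : ℝ, (r + z • (Pi.single (1 : Fin 5) 1 : Fin 5 → ℝ)) 1 = r 1 + z := by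
        intro z; simp
      have hO : ∀ (z : ℝ) (j : Fin 5), j ≠ 1 → (r + z • (Pi.single (1:Fin 5) 1 : Fin 5 → ℝ)) j = r j := by
        intro z j hj; simp [Pi.single_eq_of_ne hj]
      have hA : ∀ z : ℝ, 1 - lam • Mmat (r + z • (Pi.single (1:Fin 5) 1 : Fin 5 → ℝ)) q
          = ((1 : Matrix (Fin 4) (Fin 4) ℝ) - lam • Mmat r q).updateRow 0
            (fun t => ((1 : Matrix (Fin 4) (Fin 4) ℝ) - lam • Mmat r q) 0 t
              + z * (-(lam * (![q 1, 1 - q 1, -(q 1), -(1 - q 1)] : Fin 4 → ℝ) t))) := by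
        intro z
        have e0 := h0 z
        have e2 := hO z 2 (by decide)
        have e3 := hO z 3 (by decide)
        have e4 := hO z 4 (by decide)
        ext a b
        fin_cases a <;> fin_cases b <;>
          simp [Mmat, row2, Matrix.one_apply, Matrix.updateRow_apply, Matrix.sub_apply,
            Matrix.smul_apply, smul_eq_mul, e0, e2, e3, e4] <;> ring
      have hν : ∀ z : ℝ, nu0 (r + z • (Pi.single (1:Fin 5) 1 : Fin 5 → ℝ)) q = nu0 r q := by
        intro z; unfold nu0; rw [hO z 0 (by decide)]
      refine ⟨?_, ?_⟩
      · simp only [hA, hν]; exact Gaff _ _ _ _ _ _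
      · simp only [hA]; exact detAff _ _ _ _
    · -- i = 2
      have h0 : ∀ z : ℝ, (r + z • (Pi.single (2 : Fin 5) 1 : Fin 5 → ℝ)) 2 = r 2 + z := by
        intro z; simp
      have hO : ∀ (z : ℝ) (j : Fin 5), j ≠ 2 → (r + z • (Pi.single (2:Fin 5) 1 : Fin 5 → ℝ)) j = r j := by
        intro z j hj; simp [Pi.single_eq_of_ne hj]
      have hA : ∀ z : ℝ, 1 - lam • Mmat (r + z • (Pi.single (2:Fin 5) 1 : Fin 5 → ℝ)) q
          = ((1 : Matrix (Fin 4) (Fin 4) ℝ) - lam • Mmat r q).updateRow 1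
            (fun t => ((1 : Matrix (Fin 4) (Fin 4) ℝ) - lam • Mmat r q) 1 t
              + z * (-(lam * (![q 3, 1 - q 3, -(q 3), -(1 - q 3)] : Fin 4 → ℝ) t))) := by
        intro z
        have e0 := h0 z
        have e1 := hO z 1 (by decide)
        have e3 := hO z 3 (by decide)
        have e4 := hO z 4 (by decide)
        ext a b
        fin_cases a <;> fin_cases b <;>
          simp [Mmat, row2, Matrix.one_apply, Matrix.updateRow_apply, Matrix.sub_apply,
            Matrix.smul_apply, smul_eq_mul, e0, e1, e3, e4] <;> ring
      have hν : ∀ z : ℝ, nu0 (r + z • (Pi.single (2:Fin 5) 1 : Fin 5 → ℝ)) q = nu0 r q := by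
        intro z; unfold nu0; rw [hO z 0 (by decide)]
      refine ⟨?_, ?_⟩
      · simp only [hA, hν]; exact Gaff _ _ _ _ _ _
      · simp only [hA]; exact detAff _ _ _ _
    · -- i = 3
      have h0 : ∀ z : ℝ, (r + z • (Pi.single (3 : Fin 5) 1 : Fin 5 → ℝ)) 3 = r 3 + z := by
        intro z; simp
      have hO : ∀ (z : ℝ) (j : Fin 5), j ≠ 3 → (r + z • (Pi.single (3:Fin 5) 1 : Fin 5 → ℝ)) j = r j := by
        intro z j hj; simp [Pi.single_eq_of_ne hj]
      have hA : ∀ z : ℝ, 1 - lam • Mmat (r + z • (Pi.single (3:Fin 5) 1 : Fin 5 → ℝ)) q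
          = ((1 : Matrix (Fin 4) (Fin 4) ℝ) - lam • Mmat r q).updateRow 2
            (fun t => ((1 : Matrix (Fin 4) (Fin 4) ℝ) - lam • Mmat r q) 2 t
              + z * (-(lam * (![q 2, 1 - q 2, -(q 2), -(1 - q 2)] : Fin 4 → ℝ) t))) := by
        intro z
        have e0 := h0 z
        have e1 := hO z 1 (by decide)
        have e2 := hO z 2 (by decide)
        have e4 := hO z 4 (by decide)
        ext a b
        fin_cases a <;> fin_cases b <;>
          simp [Mmat, row2, Matrix.one_apply, Matrix.updateRow_apply, Matrix.sub_apply,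
            Matrix.smul_apply, smul_eq_mul, e0, e1, e2, e4] <;> ring
      have hν : ∀ z : ℝ, nu0 (r + z • (Pi.single (3:Fin 5) 1 : Fin 5 → ℝ)) q = nu0 r q := by
        intro z; unfold nu0; rw [hO z 0 (by decide)]
      refine ⟨?_, ?_⟩
      · simp only [hA, hν]; exact Gaff _ _ _ _ _ _
      · simp only [hA]; exact detAff _ _ _ _
    · -- i = 4
      have h0 : ∀ z : ℝ, (r + z • (Pi.single (4 : Fin 5) 1 : Fin 5 → ℝ)) 4 = r 4 + z := by
        intro z; simp
      have hO : ∀ (z : ℝ) (j : Fin 5), j ≠ 4 → (r + z • (Pi.single (4:Fin 5) 1 : Fin 5 → ℝ)) j = r j := by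
        intro z j hj; simp [Pi.single_eq_of_ne hj]
      have hA : ∀ z : ℝ, 1 - lam • Mmat (r + z • (Pi.single (4:Fin 5) 1 : Fin 5 → ℝ)) q
          = ((1 : Matrix (Fin 4) (Fin 4) ℝ) - lam • Mmat r q).updateRow 3
            (fun t => ((1 : Matrix (Fin 4) (Fin 4) ℝ) - lam • Mmat r q) 3 t
              + z * (-(lam * (![q 4, 1 - q 4, -(q 4), -(1 - q 4)] : Fin 4 → ℝ) t))) := by
        intro z
        have e0 := h0 z
        have e1 := hO z 1 (by decide)
        have e2 := hO z 2 (by decide)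
        have e3 := hO z 3 (by decide)
        ext a b
        fin_cases a <;> fin_cases b <;>
          simp [Mmat, row2, Matrix.one_apply, Matrix.updateRow_apply, Matrix.sub_apply,
            Matrix.smul_apply, smul_eq_mul, e0, e1, e2, e3] <;> ring
      have hν : ∀ z : ℝ, nu0 (r + z • (Pi.single (4:Fin 5) 1 : Fin 5 → ℝ)) q = nu0 r q := by
        intro z; unfold nu0; rw [hO z 0 (by decide)]
      refine ⟨?_, ?_⟩
      · simp only [hA, hν]; exact Gaff _ _ _ _ _ _
      · simp only [hA]; exact detAff _ _ _ _
  exact ⟨fun z => (1 - lam) * ((Matrix.vecMul (nu0 (r + z • (Pi.single i 1 : Fin 5 → ℝ)) q)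
      ((1 - lam • Mmat (r + z • (Pi.single i 1 : Fin 5 → ℝ)) q).adjugate)) ⬝ᵥ u),
    fun z => (1 - lam • Mmat (r + z • (Pi.single i 1 : Fin 5 → ℝ)) q).det,
    IsAff.const_mul _ key.1, key.2, fun z => rfl,
    fun z => by rw [pay_eq, mul_div_assoc]⟩

theorem no_local_improvement_implies_locally_constant
    (R S T P lam κX κY : ℝ) (hlam : lam ∈ Set.Ico (0:ℝ) 1)
    (p q pstar : Fin 5 → ℝ) (hp : ∀ i, p i ∈ Set.Ioo (0:ℝ) 1) (hq : inCube q)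
    (V : (Fin 5 → ℝ) → ℝ)
    (hV : ∀ p', V p' = κX * pay lam p' q (uvecX R S T P) + κY * pay lam p' q (uvecY R S T P))
    (hstar : inCube pstar) (hbr : ∀ p', inCube p' → V p' ≤ V pstar)
    (hnotbr : V p < V pstar)
    (hmono : ∀ i : Fin 5,
      MonotoneOn (fun z => V (p + z • (Pi.single i 1 : Fin 5 → ℝ))) (Set.Icc (-(p i)) (1 - p i)) ∨
      AntitoneOn (fun z => V (p + z • (Pi.single i 1 : Fin 5 → ℝ))) (Set.Icc (-(p i)) (1 - p i)))
    (hno : ∃ d₀ > (0:ℝ), ∀ p', inCube p' → (∀ i, |p' i - p i| < d₀) → V p' ≤ V p) :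
    ∃ d > (0:ℝ), ∀ p', inCube p' → (∀ i, |p' i - p i| < d) → V p' = V p := by
  obtain ⟨d₀, hd₀pos, hno'⟩ := hno
  refine ⟨d₀, hd₀pos, fun p' hp' hnear => ?_⟩
  have hpc : inCube p := fun i => ⟨(hp i).1.le, (hp i).2.le⟩
  have step : ∀ (r : Fin 5 → ℝ) (i : Fin 5), inCube r → (∀ j, |r j - p j| < d₀) → r i = p i →
      V r = V p →
      inCube (Function.update r i (p' i)) ∧ (∀ j, |Function.update r i (p' i) j - p j| < d₀)
        ∧ V (Function.update r i (p' i)) = V p := by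
    intro r i hrc hrnear hri hrV
    obtain ⟨NX, DX, hNX, hDX, hDXdet, hpayX⟩ := pay_mobius lam q (uvecX R S T P) r i
    obtain ⟨NY, DY, hNY, hDY, hDYdet, hpayY⟩ := pay_mobius lam q (uvecY R S T P) r i
    have hDeq : ∀ z, DY z = DX z := fun z => by rw [hDXdet, hDYdet]
    set N : ℝ → ℝ := fun z => κX * NX z + κY * NY z with hNdef
    have hNaff : IsAff N := (IsAff.const_mul κX hNX).add (IsAff.const_mul κY hNY)
    have hcoord : ∀ (z : ℝ) (j : Fin 5), (r + z • (Pi.single i 1 : Fin 5 → ℝ)) j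
        = if j = i then r i + z else r j := by
      intro z j
      by_cases h : j = i
      · subst h; simp
      · simp [Pi.single_eq_of_ne h, h]
    have hVz : ∀ z, V (r + z • (Pi.single i 1 : Fin 5 → ℝ)) = N z / DX z := by
      intro z
      rw [hV, hpayX z, hpayY z, hDeq z, ← mul_div_assoc, ← mul_div_assoc, ← add_div]
    have hx0 : r + (0:ℝ) • (Pi.single i 1 : Fin 5 → ℝ) = r := by simp
    have hV0 : N 0 / DX 0 = V p := by rw [← hVz 0, hx0, hrV]
    set δ : ℝ := min (min (p i) (1 - p i)) d₀ with hδdef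
    have hδpos : 0 < δ := lt_min (lt_min (hp i).1 (by linarith [(hp i).2])) hd₀pos
    have hxin : ∀ z : ℝ, |z| < δ →
        inCube (r + z • (Pi.single i 1 : Fin 5 → ℝ)) ∧
          (∀ j, |(r + z • (Pi.single i 1 : Fin 5 → ℝ)) j - p j| < d₀) := by
      intro z hz
      have hz1 : |z| < min (p i) (1 - p i) := lt_of_lt_of_le hz (min_le_left _ _)
      have hz2 : |z| < d₀ := lt_of_lt_of_le hz (min_le_right _ _)
      obtain ⟨hzl, hzr⟩ := abs_lt.mp hz1
      have hpi1 := (hp i).1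
      have hpi2 := (hp i).2
      have h1 : min (p i) (1 - p i) ≤ p i := min_le_left _ _
      have h2 : min (p i) (1 - p i) ≤ 1 - p i := min_le_right _ _
      constructor
      · intro j
        rw [hcoord z j]
        split_ifs with h
        · rw [hri]
          exact ⟨by linarith, by linarith⟩
        · exact hrc j
      · intro j
        rw [hcoord z j]
        split_ifs with h
        · subst h; rw [hri]
          simpa using hz2
        · exact hrnear j
    have hmax : ∀ z, |z| < δ → DX z ≠ 0 ∧ N z / DX z ≤ N 0 / DX 0 := by
      intro z hz
      obtain ⟨hc, hn⟩ := hxin z hz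
      have hDne : DX z ≠ 0 := by
        rw [hDXdet]
        exact det_ne lam hlam _ q hc hq
      refine ⟨hDne, ?_⟩
      rw [← hVz z, hV0]
      exact hno' _ hc hn
    have hD0 : DX 0 ≠ 0 := (hmax 0 (by simpa using hδpos)).1
    have hloc := mobius_loc N DX hNaff hDX hD0 δ hδpos hmax
    set zs : ℝ := p' i - p i with hzs
    have hupd : Function.update r i (p' i) = r + zs • (Pi.single i 1 : Fin 5 → ℝ) := by
      funext j
      rw [Function.update_apply, hcoord zs j]
      split_ifs with h
      · rw [hri]; ring
      · rfl
    have hcube' : inCube (Function.update r i (p' i)) := by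
      intro j
      rw [Function.update_apply]
      split_ifs with h
      · exact hp' i
      · exact hrc j
    have hnear' : ∀ j, |Function.update r i (p' i) j - p j| < d₀ := by
      intro j
      rw [Function.update_apply]
      split_ifs with h
      · subst h; exact hnear j
      · exact hrnear j
    have hDzs : DX zs ≠ 0 := by
      rw [hDXdet]
      refine det_ne lam hlam _ q ?_ hq
      rw [← hupd]
      exact hcube'
    refine ⟨hcube', hnear', ?_⟩
    rw [hupd, hVz zs, hloc zs hDzs, hV0]
  have hzero : ∀ j : Fin 5, |p j - p j| < d₀ := fun j => by simpa using hd₀pos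
  obtain ⟨c1, n1, v1⟩ := step p 0 hpc hzero rfl rfl
  obtain ⟨c2, n2, v2⟩ := step _ 1 c1 n1 (by simp [Function.update_apply]) v1
  obtain ⟨c3, n3, v3⟩ := step _ 2 c2 n2 (by simp [Function.update_apply]) v2
  obtain ⟨c4, n4, v4⟩ := step _ 3 c3 n3 (by simp [Function.update_apply]) v3
  obtain ⟨c5, n5, v5⟩ := step _ 4 c4 n4 (by simp [Function.update_apply]) v4
  have hfin : Function.update (Function.update (Function.update (Function.update
      (Function.update p 0 (p' 0)) 1 (p' 1)) 2 (p' 2)) 3 (p' 3)) 4 (p' 4) = p' := by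
    funext j
    fin_cases j <;> simp [Function.update_apply]
  rw [← hfin]
  exact v5
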